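/- Let d ≥ 1 and K_0 > 0, and let F : ℝ^d × S^d → ℝ satisfy degenerate ellipticity (Γ ≥ Γ′ implies F(p,Γ) ≤ F(p,Γ′)) and the Lipschitz bound |F(p,Γ) − F(p′,Γ′)| ≤ K_0(|p − p′| + ‖Γ − Γ′‖). Let Γ, Γ_0 ∈ S^d and c ≥ 0 with the smallest eigenvalue of Γ_0 − Γ at least −c, let p, p_0 ∈ ℝ^d with p ≠ p_0, let s > 0 and h > 0 satisfy √h · s ≥ K_0 h, and set w = −s (p_0 − p)/|p_0 − p|. Then √h (p_0 − p)ᵀw + (h/2) wᵀ(Γ_0 − Γ)w − h F(p,Γ) ≤ −h F(p_0, Γ_0) + (h/2) ‖Γ_0 − Γ‖ s² + K_0 h c. -/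

import Mathlib

noncomputable section

/-- Euclidean space `ℝ^d`. -/
abbrev Ed (d : ℕ) := EuclideanSpace ℝ (Fin d)

/-- The `ℓ²`-operator norm of a matrix. -/
def opN {d : ℕ} (Γ : Matrix (Fin d) (Fin d) ℝ) : ℝ :=
  ‖Matrix.toEuclideanCLM (𝕜 := ℝ) Γ‖

/-- Euclidean inner product `pᵀ w`. -/
def dotp {d : ℕ} (p w : Ed d) : ℝ := ∑ i, p i * w i

/-- Quadratic form `wᵀ Γ w`. -/
def quadForm {d : ℕ} (Γ : Matrix (Fin d) (Fin d) ℝ) (w : Ed d) : ℝ :=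
  ∑ i, ∑ j, w i * Γ i j * w j

/-- The Hessian matrix `D²φ(x)`. -/
def hess {d : ℕ} (φ : Ed d → ℝ) (x : Ed d) : Matrix (Fin d) (Fin d) ℝ :=
  Matrix.of fun i j =>
    iteratedFDeriv ℝ 2 φ x ![EuclideanSpace.single i 1, EuclideanSpace.single j 1]

/-- First-order partial derivative in direction `i`. -/
def pDeriv {d : ℕ} (i : Fin d) (φ : Ed d → ℝ) : Ed d → ℝ :=
  fun x => fderiv ℝ φ x (EuclideanSpace.single i 1)

/-- The multiindex partial derivative `D^α φ`. -/
def mDeriv {d : ℕ} (α : Fin d → ℕ) (φ : Ed d → ℝ) : Ed d → ℝ :=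
  (((List.finRange d).flatMap fun i => List.replicate (α i) i).foldr pDeriv φ)

/-- The finite set of multiindices `α` with `|α|₁ ≤ k`. -/
def multiIdx (d k : ℕ) : Finset (Fin d → ℕ) :=
  (Fintype.piFinset fun _ : Fin d => Finset.range (k + 1)).filter fun α => ∑ i, α i ≤ k

/-- `D_{h,δ} = {(p,Γ) ∈ ℝ^d × S^d : |p| ≤ K₄ h^{-δ}, ‖Γ‖ ≤ K₄ h^{-δ}}`. -/
def Dset (d : ℕ) (K4 h δ : ℝ) : Set (Ed d × Matrix (Fin d) (Fin d) ℝ) :=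
  {pΓ | pΓ.2.IsSymm ∧ ‖pΓ.1‖ ≤ K4 * h ^ (-δ) ∧ opN pΓ.2 ≤ K4 * h ^ (-δ)}

/-- `X_{h,κ} = {w ∈ ℝ^d : |w| ≤ h^{-κ}}`. -/
def Xset (d : ℕ) (h κ : ℝ) : Set (Ed d) := {w | ‖w‖ ≤ h ^ (-κ)}

end


open scoped RealInnerProductSpace

lemma dotp_eq_inner {d : ℕ} (p w : Ed d) : dotp p w = ⟪p, w⟫ := by
  simp [dotp, PiLp.inner_apply, RCLike.inner_apply, mul_comm]

lemma quadForm_eq_inner {d : ℕ} (A : Matrix (Fin d) (Fin d) ℝ) (w : Ed d) :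
    quadForm A w = ⟪w, Matrix.toEuclideanCLM (𝕜 := ℝ) A w⟫ := by
  have h1 : ∀ i, (Matrix.toEuclideanCLM (𝕜 := ℝ) A w) i = A.mulVec w i := fun i => rfl
  simp [quadForm, PiLp.inner_apply, RCLike.inner_apply, h1, Matrix.mulVec, dotProduct,
    Finset.mul_sum, mul_assoc]
  refine Finset.sum_congr rfl (fun i _ => ?_)
  rw [Finset.sum_mul]
  refine Finset.sum_congr rfl (fun j _ => ?_)
  ring

lemma quadForm_le {d : ℕ} (A : Matrix (Fin d) (Fin d) ℝ) (w : Ed d) :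
    quadForm A w ≤ opN A * ‖w‖ ^ 2 := by
  rw [quadForm_eq_inner]
  calc ⟪w, Matrix.toEuclideanCLM (𝕜 := ℝ) A w⟫ ≤ ‖w‖ * ‖Matrix.toEuclideanCLM (𝕜 := ℝ) A w‖ :=
        real_inner_le_norm _ _
    _ ≤ ‖w‖ * (opN A * ‖w‖) :=
        mul_le_mul_of_nonneg_left ((Matrix.toEuclideanCLM (𝕜 := ℝ) A).le_opNorm w) (norm_nonneg _)
    _ = opN A * ‖w‖ ^ 2 := by ring

lemma psd_add_smul {d : ℕ} {M : Matrix (Fin d) (Fin d) ℝ} (hM : M.IsHermitian) {c : ℝ}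
    (hc : ∀ i, -c ≤ hM.eigenvalues i) : (M + c • 1).PosSemidef := by
  have hUU : (hM.eigenvectorUnitary : Matrix (Fin d) (Fin d) ℝ)
      * star (hM.eigenvectorUnitary : Matrix (Fin d) (Fin d) ℝ) = 1 :=
    Matrix.mem_unitaryGroup_iff.mp hM.eigenvectorUnitary.2
  have h2 : Matrix.diagonal (fun i : Fin d => hM.eigenvalues i + c)
      = Matrix.diagonal (RCLike.ofReal ∘ hM.eigenvalues) + c • (1 : Matrix (Fin d) (Fin d) ℝ) := by
    ext i j; by_cases h : i = j <;> simp [Matrix.diagonal, Matrix.one_apply, h]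
  have key : M + c • 1 = (hM.eigenvectorUnitary : Matrix (Fin d) (Fin d) ℝ)
      * Matrix.diagonal (fun i => hM.eigenvalues i + c)
      * star (hM.eigenvectorUnitary : Matrix (Fin d) (Fin d) ℝ) := by
    rw [h2, Matrix.mul_add, Matrix.add_mul, mul_smul_comm, mul_one, smul_mul_assoc, hUU]
    exact congrArg (· + c • (1 : Matrix (Fin d) (Fin d) ℝ)) hM.spectral_theorem
  rw [key]
  exact (Matrix.PosSemidef.diagonal
    (fun i => by have := hc i; simp only [Pi.zero_apply]; linarith)).mul_mul_conjTranspose_same _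

set_option synthInstance.maxHeartbeats 1000000 in
lemma opN_neg_smul_one {d : ℕ} {c : ℝ} (hc : 0 ≤ c) :
    opN (-(c • (1 : Matrix (Fin d) (Fin d) ℝ))) ≤ c := by
  unfold opN
  rw [map_neg, norm_neg, map_smul, map_one]
  refine ContinuousLinearMap.opNorm_le_bound _ hc (fun x => ?_)
  rw [ContinuousLinearMap.smul_apply, ContinuousLinearMap.one_apply, norm_smul,
    Real.norm_eq_abs, abs_of_nonneg hc]

/-- The key estimate for the choice `w = -s (p₀ - p)/|p₀ - p|` in the
max–min consistency argument. -/
theorem stmt8 (d : ℕ) (hd : 1 ≤ d) (K0 : ℝ) (hK0 : 0 < K0)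
    (F : Ed d → Matrix (Fin d) (Fin d) ℝ → ℝ)
    (hell : ∀ (p : Ed d) (Γ Γ' : Matrix (Fin d) (Fin d) ℝ), Γ.IsHermitian → Γ'.IsHermitian →
      (Γ - Γ').PosSemidef → F p Γ ≤ F p Γ')
    (hlip : ∀ (p p' : Ed d) (Γ Γ' : Matrix (Fin d) (Fin d) ℝ), Γ.IsHermitian → Γ'.IsHermitian →
      |F p Γ - F p' Γ'| ≤ K0 * (‖p - p'‖ + opN (Γ - Γ')))
    (Γ Γ₀ : Matrix (Fin d) (Fin d) ℝ) (hΓ : Γ.IsHermitian) (hΓ₀ : Γ₀.IsHermitian)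
    (c : ℝ) (hc : 0 ≤ c)
    (heig : ∀ i, -c ≤ (Matrix.IsHermitian.sub hΓ₀ hΓ).eigenvalues i)
    (p p₀ : Ed d) (hne : p ≠ p₀)
    (s h : ℝ) (hs : 0 < s) (hh : 0 < h) (hsh : K0 * h ≤ Real.sqrt h * s)
    (w : Ed d) (hw : w = -(s / ‖p₀ - p‖) • (p₀ - p)) :
    Real.sqrt h * dotp (p₀ - p) w + (h / 2) * quadForm (Γ₀ - Γ) w - h * F p Γ
      ≤ -h * F p₀ Γ₀ + (h / 2) * opN (Γ₀ - Γ) * s ^ 2 + K0 * h * c := by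
  have hu : p₀ - p ≠ 0 := sub_ne_zero_of_ne (Ne.symm hne)
  have hnu : (0:ℝ) < ‖p₀ - p‖ := norm_pos_iff.mpr hu
  -- Step A : dot product value
  have hA : dotp (p₀ - p) w = -(s * ‖p₀ - p‖) := by
    rw [dotp_eq_inner, hw, real_inner_smul_right, real_inner_self_eq_norm_sq]
    field_simp
  -- norm of w
  have hwn : ‖w‖ = s := by
    rw [hw, norm_smul, Real.norm_eq_abs, abs_neg, abs_of_nonneg (by positivity)]
    field_simp
  -- Step B : quadratic form bound
  have hB : quadForm (Γ₀ - Γ) w ≤ opN (Γ₀ - Γ) * s ^ 2 := by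
    have := quadForm_le (Γ₀ - Γ) w
    rwa [hwn] at this
  -- Step C : F bound
  have hherm1 : (Γ₀ + c • (1 : Matrix (Fin d) (Fin d) ℝ)).IsHermitian := by
    apply hΓ₀.add
    simp [Matrix.IsHermitian, Matrix.conjTranspose_smul]
  have hpsd : ((Γ₀ + c • 1) - Γ).PosSemidef := by
    have : (Γ₀ + c • (1 : Matrix (Fin d) (Fin d) ℝ)) - Γ = (Γ₀ - Γ) + c • 1 := by
      noncomm_ring
    rw [this]
    exact psd_add_smul (hΓ₀.sub hΓ) heig
  have hell1 : F p₀ (Γ₀ + c • 1) ≤ F p₀ Γ := hell p₀ _ Γ hherm1 hΓ hpsd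
  have hlip1 : F p₀ Γ₀ - F p₀ (Γ₀ + c • 1) ≤ K0 * c := by
    have h1 := hlip p₀ p₀ Γ₀ (Γ₀ + c • 1) hΓ₀ hherm1
    have h2 : Γ₀ - (Γ₀ + c • 1) = -(c • (1 : Matrix (Fin d) (Fin d) ℝ)) := by noncomm_ring
    rw [h2, sub_self, norm_zero, zero_add] at h1
    have h3 := opN_neg_smul_one (d := d) hc
    have := abs_le.mp h1
    nlinarith [this.2]
  have hlip2 : F p₀ Γ - F p Γ ≤ K0 * ‖p₀ - p‖ := by
    have h1 := hlip p₀ p Γ Γ hΓ hΓ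
    rw [sub_self] at h1
    have h2 : opN (0 : Matrix (Fin d) (Fin d) ℝ) = 0 := by
      unfold opN; rw [map_zero, norm_zero]
    rw [h2, add_zero] at h1
    exact (abs_le.mp h1).2
  have hC : F p₀ Γ₀ ≤ F p Γ + K0 * c + K0 * ‖p₀ - p‖ := by linarith
  -- Step D : combine
  have hD : K0 * h * ‖p₀ - p‖ ≤ Real.sqrt h * s * ‖p₀ - p‖ :=
    mul_le_mul_of_nonneg_right hsh (norm_nonneg _)
  have hC' : h * F p₀ Γ₀ ≤ h * F p Γ + h * (K0 * c) + h * (K0 * ‖p₀ - p‖) := by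
    nlinarith [hC, hh.le]
  have hB' : (h / 2) * quadForm (Γ₀ - Γ) w ≤ (h / 2) * (opN (Γ₀ - Γ) * s ^ 2) := by
    nlinarith [hB, hh.le]
  rw [hA]
  nlinarith [hC', hB', hD]
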